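/- For integers e_1 < e_2 (with e_1 ≥ 1), the identity Σ_{(a,b): e_2 b > a ≥ e_1 b, b ≥ 1} X^a Y^b = Y(X^{e_1} - X^{e_2})/((1-YX^{e_1})(1-YX^{e_2})(1-X)) holds as formal power series. -/

import Mathlib

/-- `Σ_{e₂b > a ≥ e₁b, b ≥ 1} X^a Y^b
      = Y(X^{e₁} - X^{e₂})/((1-YX^{e₁})(1-YX^{e₂})(1-X))`. -/
theorem cone_sum_between (e₁ e₂ : ℕ) (he₁ : 1 ≤ e₁) (h : e₁ < e₂) (X Y : ℝ)
    (hX : |X| < 1) (hY : |Y| < 1) :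
    ∑' q : ℕ × ℕ,
        (if e₁ * q.2 ≤ q.1 ∧ q.1 < e₂ * q.2 ∧ 1 ≤ q.2 then X ^ q.1 * Y ^ q.2 else 0) =
      Y * (X ^ e₁ - X ^ e₂) / ((1 - Y * X ^ e₁) * (1 - Y * X ^ e₂) * (1 - X)) := by
  have hX1 : X ≠ 1 := by
    intro h'; rw [h'] at hX; norm_num at hX
  have h1X : (1:ℝ) - X ≠ 0 := sub_ne_zero.mpr (Ne.symm hX1)
  have habs : ∀ e : ℕ, |Y * X ^ e| < 1 := by
    intro e
    calc |Y * X ^ e| = |Y| * |X| ^ e := by rw [abs_mul, abs_pow]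
      _ ≤ |Y| * 1 := by
          gcongr
          exact pow_le_one₀ (abs_nonneg X) hX.le
      _ < 1 := by simpa using hY
  have hne : ∀ e : ℕ, (1:ℝ) - Y * X ^ e ≠ 0 := by
    intro e hc
    have : Y * X ^ e = 1 := by linarith [sub_eq_zero.mp hc]
    have h1 := habs e
    rw [this] at h1
    simpa using h1
  -- summability
  have hgsum : Summable (fun q : ℕ × ℕ => |X| ^ q.1 * |Y| ^ q.2) :=
    (summable_geometric_of_lt_one (abs_nonneg X) hX).mul_of_nonneg
      (summable_geometric_of_lt_one (abs_nonneg Y) hY)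
      (fun a => pow_nonneg (abs_nonneg X) a) (fun b => pow_nonneg (abs_nonneg Y) b)
  have hf : Summable (fun q : ℕ × ℕ =>
      if e₁ * q.2 ≤ q.1 ∧ q.1 < e₂ * q.2 ∧ 1 ≤ q.2 then X ^ q.1 * Y ^ q.2 else 0) := by
    apply Summable.of_norm_bounded hgsum
    intro q
    by_cases hq : e₁ * q.2 ≤ q.1 ∧ q.1 < e₂ * q.2 ∧ 1 ≤ q.2
    · rw [if_pos hq, Real.norm_eq_abs, abs_mul, abs_pow, abs_pow]
    · simp only [hq, if_false, norm_zero]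
      positivity
  -- swap coordinates
  have hswap : (∑' q : ℕ × ℕ,
      if e₁ * q.2 ≤ q.1 ∧ q.1 < e₂ * q.2 ∧ 1 ≤ q.2 then X ^ q.1 * Y ^ q.2 else 0)
      = ∑' q : ℕ × ℕ,
      (if e₁ * q.1 ≤ q.2 ∧ q.2 < e₂ * q.1 ∧ 1 ≤ q.1 then X ^ q.2 * Y ^ q.1 else 0) := by
    exact ((Equiv.prodComm ℕ ℕ).tsum_eq _).symm
  rw [hswap]
  have hgsum' : Summable (fun q : ℕ × ℕ => |Y| ^ q.1 * |X| ^ q.2) :=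
    (summable_geometric_of_lt_one (abs_nonneg Y) hY).mul_of_nonneg
      (summable_geometric_of_lt_one (abs_nonneg X) hX)
      (fun a => pow_nonneg (abs_nonneg Y) a) (fun b => pow_nonneg (abs_nonneg X) b)
  have hf' : Summable (fun q : ℕ × ℕ =>
      if e₁ * q.1 ≤ q.2 ∧ q.2 < e₂ * q.1 ∧ 1 ≤ q.1 then X ^ q.2 * Y ^ q.1 else 0) := by
    apply Summable.of_norm_bounded hgsum'
    intro q
    by_cases hq : e₁ * q.1 ≤ q.2 ∧ q.2 < e₂ * q.1 ∧ 1 ≤ q.1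
    · rw [if_pos hq, Real.norm_eq_abs, abs_mul, abs_pow, abs_pow]
      exact le_of_eq (mul_comm _ _)
    · rw [if_neg hq, norm_zero]
      positivity
  have hfib : ∀ b : ℕ, Summable fun c : ℕ =>
      if e₁ * (b, c).1 ≤ (b, c).2 ∧ (b, c).2 < e₂ * (b, c).1 ∧ 1 ≤ (b, c).1
      then X ^ (b, c).2 * Y ^ (b, c).1 else 0 := by
    intro b
    apply summable_of_ne_finset_zero (s := Finset.Ico (e₁ * b) (e₂ * b))
    intro a ha
    rw [Finset.mem_Ico] at ha
    push_neg at ha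
    simp only [ite_eq_right_iff]
    intro hc
    exact absurd (ha hc.1) (not_le.mpr hc.2.1)
  rw [Summable.tsum_prod' hf' hfib]
  -- inner sums
  have hinner : ∀ b : ℕ,
      (∑' a : ℕ, if e₁ * b ≤ a ∧ a < e₂ * b ∧ 1 ≤ b then X ^ a * Y ^ b else 0)
      = ((Y * X ^ e₁) ^ b - (Y * X ^ e₂) ^ b) * (1 - X)⁻¹ := by
    intro b
    rcases Nat.eq_zero_or_pos b with hb | hb
    · subst hb; simp
    · have hb1 : 1 ≤ b := hb
      have hle : e₁ * b ≤ e₂ * b := Nat.mul_le_mul_right b h.le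
      have : (∑' a : ℕ, if e₁ * b ≤ a ∧ a < e₂ * b ∧ 1 ≤ b then X ^ a * Y ^ b else 0)
          = ∑ a ∈ Finset.Ico (e₁ * b) (e₂ * b), X ^ a * Y ^ b := by
        rw [tsum_eq_sum (s := Finset.Ico (e₁ * b) (e₂ * b))]
        · apply Finset.sum_congr rfl
          intro a ha
          rw [Finset.mem_Ico] at ha
          simp [ha.1, ha.2, hb1]
        · intro a ha
          rw [Finset.mem_Ico] at ha
          push_neg at ha
          simp only [ite_eq_right_iff]
          intro hc
          exact absurd (ha hc.1) (not_le.mpr hc.2.1)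
      rw [this, ← Finset.sum_mul, geom_sum_Ico hX1 hle]
      have hX1' : X - 1 ≠ 0 := sub_ne_zero.mpr hX1
      rw [mul_pow, mul_pow, ← pow_mul, ← pow_mul]
      field_simp
      ring
  simp only [hinner]
  -- outer geometric sums
  have hs1 : Summable (fun b : ℕ => (Y * X ^ e₁) ^ b) :=
    summable_geometric_of_norm_lt_one (by rw [Real.norm_eq_abs]; exact habs e₁)
  have hs2 : Summable (fun b : ℕ => (Y * X ^ e₂) ^ b) :=
    summable_geometric_of_norm_lt_one (by rw [Real.norm_eq_abs]; exact habs e₂)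
  rw [tsum_mul_right, Summable.tsum_sub hs1 hs2,
    tsum_geometric_of_norm_lt_one (by rw [Real.norm_eq_abs]; exact habs e₁),
    tsum_geometric_of_norm_lt_one (by rw [Real.norm_eq_abs]; exact habs e₂)]
  have hA := hne e₁
  have hB := hne e₂
  rw [eq_div_iff (mul_ne_zero (mul_ne_zero hA hB) h1X)]
  field_simp
  ring
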